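/- Let λ be an isolated point of spec(A), and δ^±(λ) the distances from λ to the nearest spectral points strictly above/below λ. The following are equivalent: (1) F_L^1(t) = dist(t, spec(A)) for a single t in the open interval (λ − δ^-(λ)/2, λ + δ^+(λ)/2); (2) F_L^1(s) = dist(s, spec(A)) for all s in the closed interval [λ − δ^-(λ)/2, λ + δ^+(λ)/2]; (3) L ∩ ker(A − λ) ≠ {0}. -/

import Mathlib

open scoped InnerProductSpace

variable {H : Type*} [NormedAddCommGroup H] [InnerProductSpace ℂ H] [CompleteSpace H]

/-- `Fapp A L j t` : the `j`-th min-max value of `‖(A-t)u‖/‖u‖` over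
`j`-dimensional subspaces of `L`. -/
noncomputable def Fapp (A : H →L[ℂ] H) (L : Submodule ℂ H) (j : ℕ) (t : ℝ) : ℝ :=
  sInf {r : ℝ | 0 ≤ r ∧ ∃ V : Submodule ℂ H, V ≤ L ∧ Module.finrank ℂ V = j ∧
    ∀ u ∈ V, ‖A u - (t : ℂ) • u‖ ≤ r * ‖u‖}

/-- `dd A j t` : the `j`-th min-max value of `‖(A-t)u‖/‖u‖` over all
`j`-dimensional subspaces of the space. -/
noncomputable def dd (A : H →L[ℂ] H) (j : ℕ) (t : ℝ) : ℝ :=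
  sInf {r : ℝ | 0 ≤ r ∧ ∃ V : Submodule ℂ H, Module.finrank ℂ V = j ∧
    ∀ u ∈ V, ‖A u - (t : ℂ) • u‖ ≤ r * ‖u‖}

/-- `tr 1_{[a,b]}(A) ≥ j` : there is a `j`-dimensional subspace on which the
quadratic form of `(A-a)(A-b)` is non-positive. -/
def countGeIcc (A : H →L[ℂ] H) (a b : ℝ) (j : ℕ) : Prop :=
  ∃ V : Submodule ℂ H, Module.finrank ℂ V = j ∧
    ∀ u ∈ V, (inner ℂ (A u - (a : ℂ) • u) (A u - (b : ℂ) • u) : ℂ).re ≤ 0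

/-- `tr 1_{(a,b]}(A) ≥ j`. -/
def countGeIoc (A : H →L[ℂ] H) (a b : ℝ) (j : ℕ) : Prop :=
  ∃ V : Submodule ℂ H, Module.finrank ℂ V = j ∧
    (∀ u ∈ V, (inner ℂ (A u - (a : ℂ) • u) (A u - (b : ℂ) • u) : ℂ).re ≤ 0) ∧
    V ⊓ LinearMap.ker (A - (a : ℂ) • (1 : H →L[ℂ] H)).toLinearMap = ⊥

/-- `tr 1_{[a,b)}(A) ≥ j`. -/
def countGeIco (A : H →L[ℂ] H) (a b : ℝ) (j : ℕ) : Prop :=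
  ∃ V : Submodule ℂ H, Module.finrank ℂ V = j ∧
    (∀ u ∈ V, (inner ℂ (A u - (a : ℂ) • u) (A u - (b : ℂ) • u) : ℂ).re ≤ 0) ∧
    V ⊓ LinearMap.ker (A - (b : ℂ) • (1 : H →L[ℂ] H)).toLinearMap = ⊥

/-- `nminus A j t` : the `j`-th spectral point of `A` to the left of `t`,
counting multiplicities, i.e. `sup {s < t : tr 1_{(s,t]}(A) ≥ j}`. -/
noncomputable def nminus (A : H →L[ℂ] H) (j : ℕ) (t : ℝ) : ℝ :=
  sSup {s : ℝ | s < t ∧ countGeIoc A s t j}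

/-- `nplus A j t` : the `j`-th spectral point of `A` to the right of `t`. -/
noncomputable def nplus (A : H →L[ℂ] H) (j : ℕ) (t : ℝ) : ℝ :=
  sInf {s : ℝ | t < s ∧ countGeIco A t s j}

/-- The real spectrum of `A`. -/
def specRe (A : H →L[ℂ] H) : Set ℝ := {x : ℝ | (x : ℂ) ∈ spectrum ℂ A}

lemma quad_ineq' (A : H →L[ℂ] H) (hA : IsSelfAdjoint A) (lam t e c : ℝ)
    (h : ∀ x ∈ spectrum ℝ A, 0 ≤ (x - t)^2 - e - c*((x - lam)^2)) (u : H) :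
    e * ‖u‖^2 + c * ‖A u - (lam:ℂ) • u‖^2 ≤ ‖A u - (t:ℂ) • u‖^2 := by
  set B := A - algebraMap ℝ (H →L[ℂ] H) t with hBdef
  set C := A - algebraMap ℝ (H →L[ℂ] H) lam with hCdef
  have key : cfc (fun x : ℝ => (x - t)^2 - e - c*((x - lam)^2)) A
      = B^2 - algebraMap ℝ _ e - c • (C^2) := by
    have hsubt : cfc (fun x : ℝ => x - t) A = B := by
      rw [cfc_sub (fun x : ℝ => x) (fun _ => t) A (by fun_prop) (by fun_prop),
        cfc_id' ℝ A hA, cfc_const t A hA]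
    have hsubl : cfc (fun x : ℝ => x - lam) A = C := by
      rw [cfc_sub (fun x : ℝ => x) (fun _ => lam) A (by fun_prop) (by fun_prop),
        cfc_id' ℝ A hA, cfc_const lam A hA]
    rw [cfc_sub (fun x : ℝ => (x - t)^2 - e) (fun x : ℝ => c*((x - lam)^2)) A (by fun_prop) (by fun_prop),
      cfc_sub (fun x : ℝ => (x - t)^2) (fun _ => e) A (by fun_prop) (by fun_prop),
      cfc_const e A hA, cfc_const_mul c (fun x : ℝ => (x - lam)^2) A (by fun_prop),
      cfc_pow (fun x : ℝ => x - t) 2 A (by fun_prop) hA,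
      cfc_pow (fun x : ℝ => x - lam) 2 A (by fun_prop) hA, hsubt, hsubl]
  have hpos : (B^2 - algebraMap ℝ (H →L[ℂ] H) e - c • (C^2)).IsPositive := by
    rw [← ContinuousLinearMap.nonneg_iff_isPositive, ← key]
    exact cfc_nonneg h
  have hBsa : IsSelfAdjoint B := hA.sub (IsSelfAdjoint.algebraMap _ (IsSelfAdjoint.all t))
  have hCsa : IsSelfAdjoint C := hA.sub (IsSelfAdjoint.algebraMap _ (IsSelfAdjoint.all lam))
  have hBu : B u = A u - (t:ℂ) • u := by
    simp [hBdef, Algebra.algebraMap_eq_smul_one, algebraMap_smul]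
  have hCu : C u = A u - (lam:ℂ) • u := by
    simp [hCdef, Algebra.algebraMap_eq_smul_one, algebraMap_smul]
  have h0 := (RCLike.nonneg_iff.mp (hpos.inner_nonneg_left u)).1
  have hT : (B^2 - algebraMap ℝ (H →L[ℂ] H) e - c • (C^2)) u
      = B (B u) - (e:ℂ) • u - (c:ℂ) • (C (C u)) := by
    simp [pow_two, ContinuousLinearMap.mul_apply, Algebra.algebraMap_eq_smul_one,
      Complex.coe_smul]
  rw [hT, inner_sub_left, inner_sub_left] at h0
  simp only [map_sub] at h0
  have re_eq : ∀ z : ℂ, RCLike.re z = z.re := fun _ => rfl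
  simp only [re_eq] at h0
  have hsymB : ∀ x y : H, ⟪B x, y⟫_ℂ = ⟪x, B y⟫_ℂ := fun x y => hBsa.isSymmetric x y
  have hsymC : ∀ x y : H, ⟪C x, y⟫_ℂ = ⟪x, C y⟫_ℂ := fun x y => hCsa.isSymmetric x y
  have hB2 : (⟪B (B u), u⟫_ℂ).re = ‖B u‖^2 := by
    rw [hsymB (B u) u, inner_self_eq_norm_sq_to_K]
    norm_cast
  have hC2 : (⟪C (C u), u⟫_ℂ).re = ‖C u‖^2 := by
    rw [hsymC (C u) u, inner_self_eq_norm_sq_to_K]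
    norm_cast
  have heu : (⟪(e:ℂ) • u, u⟫_ℂ).re = e * ‖u‖^2 := by
    rw [inner_smul_left, Complex.conj_ofReal, Complex.re_ofReal_mul,
      inner_self_eq_norm_sq_to_K]
    norm_cast
  have hcu : (⟪(c:ℂ) • C (C u), u⟫_ℂ).re = c * ‖C u‖^2 := by
    rw [inner_smul_left, Complex.conj_ofReal, Complex.re_ofReal_mul, hC2]
  rw [hB2, heu, hcu] at h0
  rw [← hBu, ← hCu]
  linarith

lemma mem_spectrum_real_iff' (A : H →L[ℂ] H) (x : ℝ) :
    x ∈ spectrum ℝ A ↔ (x:ℂ) ∈ spectrum ℂ A := by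
  rw [show ((x:ℂ)) = algebraMap ℝ ℂ x from rfl]
  exact (spectrum.algebraMap_mem_iff ℂ).symm

lemma lower_bound' (A : H →L[ℂ] H) (hA : IsSelfAdjoint A) (t : ℝ) (u : H) :
    Metric.infDist t (specRe A) * ‖u‖ ≤ ‖A u - (t:ℂ) • u‖ := by
  set d := Metric.infDist t (specRe A) with hd
  have hd0 : 0 ≤ d := Metric.infDist_nonneg
  have h : ∀ x ∈ spectrum ℝ A, 0 ≤ (x - t)^2 - d^2 - 0*((x - 0)^2) := by
    intro x hx
    have hxRe : x ∈ specRe A := (mem_spectrum_real_iff' A x).mp hx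
    have h1 : d ≤ dist t x := Metric.infDist_le_dist_of_mem hxRe
    rw [Real.dist_eq] at h1
    have h2 : |t - x| ^ 2 = (x - t)^2 := by rw [sq_abs]; ring
    nlinarith [abs_nonneg (t - x)]
  have := quad_ineq' A hA 0 t (d^2) 0 h u
  nlinarith [norm_nonneg (A u - (t:ℂ) • u), norm_nonneg u, mul_nonneg hd0 (norm_nonneg u)]

lemma fapp_mem_set' (A : H →L[ℂ] H) (L : Submodule ℂ H) (t r : ℝ) (hr : 0 ≤ r)
    (u : H) (hu : u ∈ L) (hu0 : u ≠ 0) (hb : ‖A u - (t:ℂ) • u‖ ≤ r * ‖u‖) :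
    r ∈ {r : ℝ | 0 ≤ r ∧ ∃ V : Submodule ℂ H, V ≤ L ∧ Module.finrank ℂ V = 1 ∧
      ∀ v ∈ V, ‖A v - (t : ℂ) • v‖ ≤ r * ‖v‖} := by
  refine ⟨hr, Submodule.span ℂ {u}, ?_, ?_, ?_⟩
  · rw [Submodule.span_singleton_le_iff_mem]; exact hu
  · exact finrank_span_singleton hu0
  · intro v hv
    obtain ⟨a, rfl⟩ := Submodule.mem_span_singleton.mp hv
    calc ‖A (a • u) - (t:ℂ) • (a • u)‖ = ‖a‖ * ‖A u - (t:ℂ) • u‖ := by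
          rw [map_smul, smul_comm, ← smul_sub, norm_smul]
      _ ≤ ‖a‖ * (r * ‖u‖) := by
          exact mul_le_mul_of_nonneg_left hb (norm_nonneg a)
      _ = r * ‖a • u‖ := by rw [norm_smul]; ring

lemma fapp_le' (A : H →L[ℂ] H) (L : Submodule ℂ H) (t r : ℝ) (hr : 0 ≤ r)
    (u : H) (hu : u ∈ L) (hu0 : u ≠ 0) (hb : ‖A u - (t:ℂ) • u‖ ≤ r * ‖u‖) :
    Fapp A L 1 t ≤ r :=
  csInf_le ⟨0, fun _ hs => hs.1⟩ (fapp_mem_set' A L t r hr u hu hu0 hb)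

lemma fapp_attained' (A : H →L[ℂ] H) (L : Submodule ℂ H) [FiniteDimensional ℂ L]
    (hL : 1 ≤ Module.finrank ℂ L) (t : ℝ) :
    ∃ u : H, u ∈ L ∧ ‖u‖ = 1 ∧ Fapp A L 1 t = ‖A u - (t:ℂ) • u‖ := by
  have : Nontrivial L := Module.nontrivial_of_finrank_pos (R := ℂ) (by omega)
  obtain ⟨v, hv0⟩ := exists_ne (0 : L)
  have hvn : ‖v‖ ≠ 0 := by simpa using hv0
  set w₀ : L := ((‖v‖⁻¹ : ℝ) : ℂ) • v with hw₀
  have hw₀n : ‖w₀‖ = 1 := by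
    rw [hw₀, norm_smul]
    simp only [Complex.norm_real, norm_inv, norm_norm]
    exact inv_mul_cancel₀ hvn
  have hS : (Metric.sphere (0:L) 1).Nonempty := ⟨w₀, by simp [hw₀n]⟩
  have hf : Continuous fun w : L => ‖A (w:H) - (t:ℂ) • (w:H)‖ := by
    apply Continuous.norm
    exact (A.continuous.comp continuous_subtype_val).sub
      (continuous_subtype_val.const_smul _)
  obtain ⟨u, huS, hmin⟩ := (isCompact_sphere (0:L) 1).exists_isMinOn hS hf.continuousOn
  have hun : ‖u‖ = 1 := by simpa using huS
  have hun0 : (u:H) ≠ 0 := by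
    intro h
    rw [show ‖u‖ = ‖(u:H)‖ from rfl, h] at hun; simp at hun
  set m := ‖A (u:H) - (t:ℂ) • (u:H)‖ with hm
  have hmem := fapp_mem_set' A L t m (norm_nonneg _) u u.2 hun0
    (by rw [show ‖(u:H)‖ = ‖u‖ from rfl, hun, mul_one])
  refine ⟨u, u.2, hun, le_antisymm (csInf_le ⟨0, fun _ hs => hs.1⟩ hmem) ?_⟩
  apply le_csInf ⟨m, hmem⟩
  rintro r ⟨hr0, V, hVL, hV1, hVb⟩
  have hVne : V ≠ ⊥ := by
    intro hbot
    rw [hbot] at hV1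
    simp at hV1
  obtain ⟨x, hxV, hx0⟩ := (Submodule.ne_bot_iff V).mp hVne
  have hxL : x ∈ L := hVL hxV
  have hxn : ‖x‖ ≠ 0 := by simpa using hx0
  set y : L := ⟨((‖x‖⁻¹ : ℝ) : ℂ) • x, L.smul_mem _ hxL⟩ with hy
  have hyn : ‖y‖ = 1 := by
    rw [show ‖y‖ = ‖((‖x‖⁻¹ : ℝ) : ℂ) • x‖ from rfl, norm_smul]
    simp only [Complex.norm_real, norm_inv, norm_norm]
    exact inv_mul_cancel₀ hxn
  have hyS : y ∈ Metric.sphere (0:L) 1 := by simp [hyn]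
  have := hmin hyS
  have hb := hVb x hxV
  have hval : ‖A ((y:H)) - (t:ℂ) • (y:H)‖ ≤ r := by
    have heq : (y:H) = ((‖x‖⁻¹ : ℝ) : ℂ) • x := rfl
    rw [heq, map_smul, smul_comm, ← smul_sub, norm_smul]
    have : ‖(((‖x‖⁻¹ : ℝ)) : ℂ)‖ = ‖x‖⁻¹ := by
      simp
    rw [this]
    calc ‖x‖⁻¹ * ‖A x - (t:ℂ) • x‖ ≤ ‖x‖⁻¹ * (r * ‖x‖) := by
          exact mul_le_mul_of_nonneg_left hb (by positivity)
      _ = r * (‖x‖⁻¹ * ‖x‖) := by ring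
      _ = r := by rw [inv_mul_cancel₀ hxn, mul_one]
  exact le_trans this hval



section main
variable (A : H →L[ℂ] H) (lam δm δp : ℝ)

lemma dist_eq' (hlam : lam ∈ specRe A) (hδm : 0 < δm) (hδp : 0 < δp)
    (hgap : specRe A ∩ Set.Ioo (lam - δm) (lam + δp) ⊆ {lam})
    (s : ℝ) (hs : s ∈ Set.Icc (lam - δm / 2) (lam + δp / 2)) :
    Metric.infDist s (specRe A) = |s - lam| := by
  obtain ⟨hs1, hs2⟩ := hs
  apply le_antisymm
  · have := Metric.infDist_le_dist_of_mem hlam (x := s)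
    rwa [Real.dist_eq] at this
  · have hpt : ∀ x ∈ specRe A, |s - lam| ≤ dist s x := by
      intro x hx
      rw [Real.dist_eq]
      by_cases hmem : x ∈ Set.Ioo (lam - δm) (lam + δp)
      · have : x = lam := hgap ⟨hx, hmem⟩
        rw [this]
      · have hx2 : x ≤ lam - δm ∨ lam + δp ≤ x := by
          rcases le_or_gt x (lam - δm) with h | h
          · exact Or.inl h
          rcases le_or_gt (lam + δp) x with h' | h'
          · exact Or.inr h'
          exact absurd (Set.mem_Ioo.mpr ⟨h, h'⟩) hmem
        have h1 : s - x ≤ |s - x| := le_abs_self _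
        have h2 : x - s ≤ |s - x| := by rw [abs_sub_comm]; exact le_abs_self _
        rcases hx2 with h | h
        · exact abs_le.mpr ⟨by linarith, by linarith⟩
        · exact abs_le.mpr ⟨by linarith, by linarith⟩
    by_contra hlt
    push_neg at hlt
    obtain ⟨y, hy, hdy⟩ := (Metric.infDist_lt_iff ⟨lam, hlam⟩).mp hlt
    exact absurd hdy (not_lt.mpr (hpt y hy))

set_option maxHeartbeats 1000000 in
lemma key_step' (hA : IsSelfAdjoint A) (L : Submodule ℂ H) [FiniteDimensional ℂ L]
    (hL : 1 ≤ Module.finrank ℂ L)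
    (hlam : lam ∈ specRe A) (hδm : 0 < δm) (hδp : 0 < δp)
    (hgap : specRe A ∩ Set.Ioo (lam - δm) (lam + δp) ⊆ {lam})
    (t : ℝ) (ht : t ∈ Set.Ioo (lam - δm / 2) (lam + δp / 2))
    (heq : Fapp A L 1 t = Metric.infDist t (specRe A)) :
    ∃ u : H, u ∈ L ∧ u ≠ 0 ∧ A u = (lam : ℂ) • u := by
  obtain ⟨ht1, ht2⟩ := ht
  obtain ⟨u, huL, hun, hF⟩ := fapp_attained' A L hL t
  have hun0 : u ≠ 0 := by intro h; rw [h, norm_zero] at hun; norm_num at hun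
  have : Nontrivial H := ⟨⟨u, 0, hun0⟩⟩
  have hdist : Metric.infDist t (specRe A) = |t - lam| :=
    dist_eq' A lam δm δp hlam hδm hδp hgap t ⟨le_of_lt ht1, le_of_lt ht2⟩
  have hnorm : ‖A u - (t:ℂ) • u‖ = |t - lam| := by rw [← hF, heq, hdist]
  set b := |t - lam| with hb
  have hb0 : 0 ≤ b := abs_nonneg _
  set η := min (t - (lam - δm)) ((lam + δp) - t) - b with hηdef
  have hη : 0 < η := by
    have hb1 : b < t - (lam - δm) := abs_lt.mpr ⟨by linarith, by linarith⟩
    have hb2 : b < (lam + δp) - t := abs_lt.mpr ⟨by linarith, by linarith⟩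
    have := lt_min hb1 hb2
    simp only [hηdef]
    linarith
  set M := (‖A‖ + |lam|)^2 + 1 with hM
  have hMpos : 0 < M := by positivity
  set c := η^2 / M with hc
  have hcpos : 0 < c := by positivity
  have hspec : ∀ x ∈ spectrum ℝ A, 0 ≤ (x - t)^2 - b^2 - c*((x - lam)^2) := by
    intro x hx
    have hxC : (x:ℂ) ∈ spectrum ℂ A := (mem_spectrum_real_iff' A x).mp hx
    have hxRe : x ∈ specRe A := hxC
    have hxb : |x| ≤ ‖A‖ := by
      have := spectrum.norm_le_norm_of_mem hxC
      simpa using this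
    by_cases hmem : x ∈ Set.Ioo (lam - δm) (lam + δp)
    · have hxl : x = lam := hgap ⟨hxRe, hmem⟩
      rw [hxl]
      have : b^2 = (t - lam)^2 := sq_abs _
      nlinarith
    · have hx2 : x ≤ lam - δm ∨ lam + δp ≤ x := by
        rcases le_or_gt x (lam - δm) with h | h
        · exact Or.inl h
        rcases le_or_gt (lam + δp) x with h' | h'
        · exact Or.inr h'
        exact absurd (Set.mem_Ioo.mpr ⟨h, h'⟩) hmem
      have hbt : b + η ≤ |x - t| := by
        rcases hx2 with h | h
        · have hxt : x < t := by linarith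
          rw [abs_of_neg (by linarith : x - t < 0)]
          have := min_le_left (t - (lam - δm)) ((lam + δp) - t)
          simp only [hηdef]
          linarith
        · have hxt : t < x := by linarith
          rw [abs_of_pos (by linarith : 0 < x - t)]
          have := min_le_right (t - (lam - δm)) ((lam + δp) - t)
          simp only [hηdef]
          linarith
      have h6 : (b + η)^2 ≤ (x - t)^2 := by
        nlinarith [sq_abs (x - t), abs_nonneg (x - t)]
      have h3 : |x - lam| ≤ |x| + |lam| := by
        simpa [sub_eq_add_neg] using abs_add_le x (-lam)
      have h4 : (x - lam)^2 ≤ M := by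
        nlinarith [sq_abs (x - lam), abs_nonneg (x - lam), abs_nonneg x, abs_nonneg lam,
          norm_nonneg A]
      have h5 : c * ((x - lam)^2) ≤ η^2 := by
        calc c * ((x - lam)^2) ≤ c * M := by
              exact mul_le_mul_of_nonneg_left h4 (le_of_lt hcpos)
          _ = η^2 := by rw [hc]; field_simp
      have h7 : b^2 + η^2 ≤ (b + η)^2 := by nlinarith [mul_nonneg hb0 hη.le]
      linarith
  have hq := quad_ineq' A hA lam t (b^2) c hspec u
  rw [hnorm, hun] at hq
  have hnz : ‖A u - (lam:ℂ) • u‖^2 ≤ 0 := by nlinarith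
  have : ‖A u - (lam:ℂ) • u‖ = 0 := by nlinarith [norm_nonneg (A u - (lam:ℂ) • u)]
  have := norm_eq_zero.mp this
  exact ⟨u, huL, hun0, by rwa [sub_eq_zero] at this⟩

end main

/-- for an isolated spectral point `λ` whose distances to the
spectrum strictly below/above are at least `δm`/`δp`, the equality
`F_L^1 = dist(·, spec A)` at a single point of the open half-gap interval, the
same equality on the whole closed half-gap interval, and
`L ∩ ker(A - λ) ≠ {0}` are all equivalent. -/
theorem stmt_7 (A : H →L[ℂ] H) (hA : IsSelfAdjoint A)
    (L : Submodule ℂ H) [FiniteDimensional ℂ L] (hL : 1 ≤ Module.finrank ℂ L)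
    (lam δm δp : ℝ) (hlam : lam ∈ specRe A) (hδm : 0 < δm) (hδp : 0 < δp)
    (hgap : specRe A ∩ Set.Ioo (lam - δm) (lam + δp) ⊆ {lam}) :
    ((∃ t ∈ Set.Ioo (lam - δm / 2) (lam + δp / 2),
        Fapp A L 1 t = Metric.infDist t (specRe A)) ↔
      (∀ s ∈ Set.Icc (lam - δm / 2) (lam + δp / 2),
        Fapp A L 1 s = Metric.infDist s (specRe A))) ∧
    ((∀ s ∈ Set.Icc (lam - δm / 2) (lam + δp / 2),
        Fapp A L 1 s = Metric.infDist s (specRe A)) ↔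
      L ⊓ LinearMap.ker (A - (lam : ℂ) • (1 : H →L[ℂ] H)).toLinearMap ≠ ⊥) := by
  classical
  set K := LinearMap.ker (A - (lam : ℂ) • (1 : H →L[ℂ] H)).toLinearMap with hK
  have hker : ∀ u : H, u ∈ K ↔ A u - (lam:ℂ) • u = 0 := by
    intro u
    simp [hK, LinearMap.mem_ker]
  have mk_P3 : ∀ u : H, u ∈ L → u ≠ 0 → A u = (lam:ℂ) • u → L ⊓ K ≠ ⊥ := by
    intro u huL hu0 hAu
    exact (Submodule.ne_bot_iff _).mpr
      ⟨u, Submodule.mem_inf.mpr ⟨huL, (hker u).mpr (by rw [hAu, sub_self])⟩, hu0⟩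
  have hP3_forall : (L ⊓ K ≠ ⊥) → ∀ s ∈ Set.Icc (lam - δm/2) (lam + δp/2),
      Fapp A L 1 s = Metric.infDist s (specRe A) := by
    intro hP3 s hs
    obtain ⟨u, huLK, hu0⟩ := (Submodule.ne_bot_iff _).mp hP3
    obtain ⟨huL, huK⟩ := Submodule.mem_inf.mp huLK
    have hAu : A u = (lam:ℂ) • u := by
      have := (hker u).mp huK
      rwa [sub_eq_zero] at this
    have hdist := dist_eq' A lam δm δp hlam hδm hδp hgap s hs
    apply le_antisymm
    · rw [hdist]
      apply fapp_le' A L s _ (abs_nonneg _) u huL hu0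
      have heq : A u - (s:ℂ) • u = ((lam - s : ℝ) : ℂ) • u := by
        rw [hAu]
        push_cast
        rw [← sub_smul]
      rw [heq, norm_smul, Complex.norm_real, Real.norm_eq_abs, abs_sub_comm]
    · obtain ⟨w, hwL, hwn, hFw⟩ := fapp_attained' A L hL s
      rw [hFw]
      have := lower_bound' A hA s w
      rwa [hwn, mul_one] at this
  have hlam_Icc : lam ∈ Set.Icc (lam - δm/2) (lam + δp/2) := ⟨by linarith, by linarith⟩
  have hlam_Ioo : lam ∈ Set.Ioo (lam - δm/2) (lam + δp/2) := ⟨by linarith, by linarith⟩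
  have h_exists_P3 : (∃ t ∈ Set.Ioo (lam - δm / 2) (lam + δp / 2),
      Fapp A L 1 t = Metric.infDist t (specRe A)) → L ⊓ K ≠ ⊥ := by
    rintro ⟨t, ht, heq⟩
    obtain ⟨u, huL, hu0, hAu⟩ := key_step' A lam δm δp hA L hL hlam hδm hδp hgap t ht heq
    exact mk_P3 u huL hu0 hAu
  refine ⟨⟨fun h => hP3_forall (h_exists_P3 h), fun hall => ⟨lam, hlam_Ioo, hall lam hlam_Icc⟩⟩,
    ⟨fun hall => h_exists_P3 ⟨lam, hlam_Ioo, hall lam hlam_Icc⟩, hP3_forall⟩⟩
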